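/- Let p ≥ 3 be a prime and let B : ℕ × ℕ → ℤ satisfy Jenkins' identity: for all n ≥ 1, B(D, p^{2n}d) = pⁿB(p^{2n}D, d) + Σ_{k=0}^{n-1} (D/p)^{n-k-1}(B(D/p², p^{2k}d) − p^{k+1}B(p^{2k}D, d/p²)) + Σ_{k=0}^{n-1} (D/p)^{n-k-1}((D/p) − (−d/p))·p^k·B(p^k D, d), where B(a,b) := 0 when the arguments are not valid and (·/p) is the Legendre symbol. Suppose p ∣ D but p² ∤ D. Then for all n ≥ 1, B(D, p^{2n}d) ≡ −(−d/p)·p^{n−1}·B(p^{2(n-1)}D, d) (mod pⁿ). In particular |B(D, p^{2n}d)|_p → 0 as n → ∞, i.e., the p-adic limit of B(D, p^{2n}d) is 0. -/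

import Mathlib

open Filter Finset

/-- Jenkins' identity for the traces of singular moduli `B(D,d)`, with the convention
that `B(a,b) = 0` for invalid arguments (in particular `B(D/p², ·) = 0` when `p² ∤ D`
and `B(·, d/p²) = 0` when `p² ∤ d`), and `(·/p)` the Legendre symbol. -/
def JenkinsId (p : ℕ) [Fact p.Prime] (B : ℕ → ℕ → ℤ) : Prop :=
  ∀ D d n : ℕ, 1 ≤ n →
    B D (p ^ (2 * n) * d) =
      (p : ℤ) ^ n * B (p ^ (2 * n) * D) d
        + ∑ k ∈ range n, (legendreSym p (D : ℤ)) ^ (n - k - 1) *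
            ((if p ^ 2 ∣ D then B (D / p ^ 2) (p ^ (2 * k) * d) else 0)
              - (p : ℤ) ^ (k + 1) *
                (if p ^ 2 ∣ d then B (p ^ (2 * k) * D) (d / p ^ 2) else 0))
        + ∑ k ∈ range n, (legendreSym p (D : ℤ)) ^ (n - k - 1) *
            ((legendreSym p (D : ℤ) - legendreSym p (-(d : ℤ))) * (p : ℤ) ^ k *
              B (p ^ k * D) d)

lemma jenkins_leg_zero (p : ℕ) [Fact p.Prime] (m : ℕ) (h : p ∣ m) :
    legendreSym p (m : ℤ) = 0 := by
  rw [legendreSym.eq_zero_iff]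
  exact_mod_cast (ZMod.natCast_eq_zero_iff m p).mpr h

lemma jenkins_leg_neg_zero (p : ℕ) [Fact p.Prime] (m : ℕ) (h : p ∣ m) :
    legendreSym p (-(m : ℤ)) = 0 := by
  rw [legendreSym.eq_zero_iff]; push_cast
  simp [(ZMod.natCast_eq_zero_iff m p).mpr h]

/-- Jenkins' identity collapses when `(D/p) = 0`: only the `k = n-1` terms survive. -/
lemma jenkins_collapse (p : ℕ) [Fact p.Prime] (B : ℕ → ℕ → ℤ) (hJ : JenkinsId p B)
    (D d n : ℕ) (hn : 1 ≤ n) (hχ : legendreSym p (D : ℤ) = 0) :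
    B D (p ^ (2 * n) * d) =
      (p : ℤ) ^ n * B (p ^ (2 * n) * D) d
        + ((if p ^ 2 ∣ D then B (D / p ^ 2) (p ^ (2 * (n - 1)) * d) else 0)
            - (p : ℤ) ^ n *
              (if p ^ 2 ∣ d then B (p ^ (2 * (n - 1)) * D) (d / p ^ 2) else 0))
        - legendreSym p (-(d : ℤ)) * (p : ℤ) ^ (n - 1) * B (p ^ (n - 1) * D) d := by
  have h := hJ D d n hn
  rw [hχ] at h
  rw [Finset.sum_eq_single (n - 1), Finset.sum_eq_single (n - 1)] at h
  · have e0 : n - (n - 1) - 1 = 0 := by omega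
    have e1 : n - 1 + 1 = n := by omega
    rw [e0, e1] at h
    rw [h]; ring
  · intro b hb hbne
    have : n - b - 1 ≠ 0 := by simp at hb; omega
    rw [zero_pow this]; ring
  · intro h'; exact absurd (Finset.mem_range.mpr (by omega)) h'
  · intro b hb hbne
    have : n - b - 1 ≠ 0 := by simp at hb; omega
    rw [zero_pow this]; ring
  · intro h'; exact absurd (Finset.mem_range.mpr (by omega)) h'

lemma jenkins_key (p : ℕ) [Fact p.Prime] (B : ℕ → ℕ → ℤ) (hJ : JenkinsId p B)
    (D d : ℕ) (hpD : p ∣ D) (hp2D : ¬ p ^ 2 ∣ D) (n : ℕ) (hn : 1 ≤ n) :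
    ∃ t : ℤ, B D (p ^ (2 * n) * d) =
      -(legendreSym p (-(d : ℤ))) * (p : ℤ) ^ (n - 1) * B (p ^ (2 * (n - 1)) * D) d
        + (p : ℤ) ^ n * t := by
  have hppos : 0 < p := (Fact.out : p.Prime).pos
  have hχD : legendreSym p (D : ℤ) = 0 := jenkins_leg_zero p D hpD
  obtain ⟨m, rfl⟩ := Nat.exists_eq_add_of_le hn
  cases m with
  | zero =>
    have h1 := jenkins_collapse p B hJ D d 1 le_rfl hχD
    simp only [if_neg hp2D] at h1
    refine ⟨B (p ^ (2 * 1) * D) d -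
      (if p ^ 2 ∣ d then B (p ^ (2 * 0) * D) (d / p ^ 2) else 0), ?_⟩
    norm_num at h1 ⊢
    split_ifs at h1 ⊢ <;> rw [h1] <;> ring
  | succ k =>
    have hnn : 1 + (k + 1) = k + 2 := by ring
    rw [hnn]
    -- Step A : Jenkins at (D, p²d, k+1)
    have hA := jenkins_collapse p B hJ D (p ^ 2 * d) (k + 1) (by omega) hχD
    have eA : p ^ (2 * (k + 1)) * (p ^ 2 * d) = p ^ (2 * (k + 2)) * d := by ring
    rw [eA] at hA
    simp only [if_neg hp2D] at hA
    have hdvd : p ^ 2 ∣ p ^ 2 * d := ⟨d, rfl⟩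
    rw [if_pos hdvd, Nat.mul_div_cancel_left d (by positivity)] at hA
    rw [jenkins_leg_neg_zero p (p ^ 2 * d) ⟨p * d, by ring⟩] at hA
    norm_num at hA
    -- Step B : Jenkins at (p^{2(k+1)}D, d, 1)
    have hχD' : legendreSym p ((p ^ (2 * (k + 1)) * D : ℕ) : ℤ) = 0 :=
      jenkins_leg_zero p _ (Dvd.dvd.mul_right (dvd_pow_self p (by omega)) D)
    have hB := jenkins_collapse p B hJ (p ^ (2 * (k + 1)) * D) d 1 le_rfl hχD'
    have hdvd2 : p ^ 2 ∣ p ^ (2 * (k + 1)) * D :=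
      Dvd.dvd.mul_right (pow_dvd_pow p (by omega)) D
    rw [if_pos hdvd2] at hB
    have ediv : p ^ (2 * (k + 1)) * D / p ^ 2 = p ^ (2 * k) * D := by
      have e : p ^ (2 * (k + 1)) * D = p ^ 2 * (p ^ (2 * k) * D) := by ring
      rw [e, Nat.mul_div_cancel_left _ (by positivity)]
    have eB2 : p ^ (2 * 1) * (p ^ (2 * (k + 1)) * D) = p ^ (2 * (k + 2)) * D := by ring
    rw [ediv, eB2] at hB
    norm_num at hB
    refine ⟨B (p ^ (2 * (k + 2)) * D) d -
      (if p ^ 2 ∣ d then B (p ^ (2 * (k + 1)) * D) (d / p ^ 2) else 0), ?_⟩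
    have e1 : k + 2 - 1 = k + 1 := rfl
    rw [e1]
    split_ifs at hB ⊢ <;> linear_combination hA + (p : ℤ) ^ (k + 1) * hB

/-- If `p ∣ D` but `p² ∤ D`, then `B(D, p^{2n}d) ≡ −(−d/p)·p^{n−1}·B(p^{2(n−1)}D, d)
(mod pⁿ)` for all `n ≥ 1`; in particular the `p`-adic limit of `B(D, p^{2n}d)` is `0`. -/
theorem jenkins_p_exactly_divides_D (p : ℕ) [Fact p.Prime] (hp3 : 3 ≤ p)
    (B : ℕ → ℕ → ℤ) (hJ : JenkinsId p B) (D d : ℕ) (hpD : p ∣ D) (hp2D : ¬ p ^ 2 ∣ D) :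
    (∀ n : ℕ, 1 ≤ n →
        B D (p ^ (2 * n) * d) ≡
          -(legendreSym p (-(d : ℤ))) * (p : ℤ) ^ (n - 1) * B (p ^ (2 * (n - 1)) * D) d
          [ZMOD (p : ℤ) ^ n]) ∧
      Tendsto (fun n : ℕ => ((B D (p ^ (2 * n) * d) : ℤ) : ℚ_[p])) atTop (nhds 0) := by
  have hppos : 0 < p := (Fact.out : p.Prime).pos
  have hp1 : (1 : ℝ) < p := by exact_mod_cast by omega
  constructor
  · intro n hn
    obtain ⟨t, ht⟩ := jenkins_key p B hJ D d hpD hp2D n hn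
    rw [Int.ModEq]
    rw [ht]
    simp [Int.add_mul_emod_self_left]
  · -- norm bound
    have hnorm : ∀ n : ℕ, 1 ≤ n →
        ‖((B D (p ^ (2 * n) * d) : ℤ) : ℚ_[p])‖ ≤ ((p : ℝ)⁻¹) ^ (n - 1) := by
      intro n hn
      obtain ⟨t, ht⟩ := jenkins_key p B hJ D d hpD hp2D n hn
      have hpow : (p : ℤ) ^ n = (p : ℤ) ^ (n - 1) * p := by
        rw [← pow_succ]; congr 1; omega
      have hfac : B D (p ^ (2 * n) * d) = (p : ℤ) ^ (n - 1) *
          (-(legendreSym p (-(d : ℤ))) * B (p ^ (2 * (n - 1)) * D) d + p * t) := by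
        rw [ht, hpow]; ring
      rw [hfac]
      push_cast
      rw [norm_mul, norm_pow, Padic.norm_p]
      have hb : ‖((-(legendreSym p (-(d : ℤ))) * B (p ^ (2 * (n - 1)) * D) d
          + (p : ℤ) * t : ℤ) : ℚ_[p])‖ ≤ 1 := Padic.norm_int_le_one _
      calc ((p : ℝ)⁻¹) ^ (n - 1) * ‖((-(legendreSym p (-(d : ℤ)) : ℚ_[p])) *
              (B (p ^ (2 * (n - 1)) * D) d : ℤ) + (p : ℚ_[p]) * (t : ℚ_[p]))‖
          ≤ ((p : ℝ)⁻¹) ^ (n - 1) * 1 := by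
            apply mul_le_mul_of_nonneg_left _ (by positivity)
            have := Padic.norm_int_le_one (p := p)
              (-(legendreSym p (-(d : ℤ))) * B (p ^ (2 * (n - 1)) * D) d + (p : ℤ) * t)
            calc ‖((-(legendreSym p (-(d : ℤ)) : ℚ_[p])) *
                (B (p ^ (2 * (n - 1)) * D) d : ℤ) + (p : ℚ_[p]) * (t : ℚ_[p]))‖
                = ‖(((-(legendreSym p (-(d : ℤ))) * B (p ^ (2 * (n - 1)) * D) d
                    + (p : ℤ) * t : ℤ) : ℚ_[p]))‖ := by push_cast; ring_nf
              _ ≤ 1 := this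
        _ = ((p : ℝ)⁻¹) ^ (n - 1) := mul_one _
    rw [tendsto_zero_iff_norm_tendsto_zero]
    apply squeeze_zero' (Filter.Eventually.of_forall fun n => norm_nonneg _)
      (Filter.eventually_atTop.mpr ⟨1, fun n hn => hnorm n hn⟩)
    have h0 : Tendsto (fun n : ℕ => ((p : ℝ)⁻¹) ^ n) atTop (nhds 0) :=
      tendsto_pow_atTop_nhds_zero_of_lt_one (by positivity) (inv_lt_one_of_one_lt₀ hp1)
    exact h0.comp (tendsto_sub_atTop_nat 1)
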